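/- Let Q ⊂ ℤ^d be a finite set and let Λ(Q) := {m − k : m ∈ Q, k ∈ Q}. Let p be a prime and a a natural number with 1 ≤ a < p such that for every nonzero m ∈ Λ(Q) one has m₁ + a·m₂ + ⋯ + a^{d−1}·m_d ≢ 0 (mod p). Define ξ^ν ∈ 𝕋^d by ξ^ν_j := 2π·{ν·a^{j−1}/p} for ν = 1, …, p. Then for every vector b = (b₁, …, b_p) ∈ ℂ^p the polynomial T(b)(x) := (1/p)·∑_{ν=1}^p b_ν·𝒟_Q(x − ξ^ν) satisfies ‖T(b)‖₂ ≤ ((1/p)·∑_{ν=1}^p |b_ν|²)^{1/2}. -/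

import Mathlib

open MeasureTheory Real Finset

noncomputable section

/-- The cube `[0, 2π)^d` representing the torus `𝕋^d`. -/
def torusCube (d : ℕ) : Set (Fin d → ℝ) := Set.univ.pi fun _ => Set.Ico 0 (2 * π)

/-- The trigonometric polynomial with frequencies in `Q` and coefficients `c`. -/
def trigSum {d : ℕ} (Q : Finset (Fin d → ℤ)) (c : (Fin d → ℤ) → ℂ) : (Fin d → ℝ) → ℂ :=
  fun x => ∑ k ∈ Q, c k * Complex.exp (Complex.I * ∑ j, (k j : ℂ) * (x j : ℂ))

/-- `‖f‖_q^q = (2π)^{-d} ∫_{𝕋^d} |f(x)|^q dx`. -/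
def lqNormPow (d : ℕ) (q : ℝ) (f : (Fin d → ℝ) → ℂ) : ℝ :=
  ((2 * π) ^ d)⁻¹ * ∫ x in torusCube d, ‖f x‖ ^ q

open Classical in
/-- The step hyperbolic cross `Q_n`. -/
def hyperCross (d n : ℕ) : Finset (Fin d → ℤ) :=
  (Fintype.piFinset fun _ : Fin d => Finset.Icc (-(2 ^ n : ℤ)) (2 ^ n)).filter
    fun k => ∃ s : Fin d → ℕ, (∑ j, s j) ≤ n ∧
      ∀ j, ((2 ^ s j / 2 : ℕ) : ℤ) ≤ |k j| ∧ |k j| < 2 ^ s j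

/-- sup-norm over the torus. -/
def supNorm (d : ℕ) (f : (Fin d → ℝ) → ℂ) : ℝ := ⨆ x : Fin d → ℝ, ‖f x‖

/-- entropy number `ε_k(A, L_∞)` with centers in `A`. -/
def entropyNum (d : ℕ) (A : Set ((Fin d → ℝ) → ℂ)) (k : ℕ) : ℝ :=
  sInf {ε : ℝ | ∃ y : Fin (2 ^ k) → ((Fin d → ℝ) → ℂ), (∀ j, y j ∈ A) ∧
    ∀ f ∈ A, ∃ j, ∀ x, ‖f x - y j x‖ ≤ ε}

/-- unit `L_q`-ball of `𝒯(Q_n)`. -/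
def trigBall (d : ℕ) (Q : Finset (Fin d → ℤ)) (q : ℝ) : Set ((Fin d → ℝ) → ℂ) :=
  {f | ∃ c : (Fin d → ℤ) → ℂ, f = trigSum Q c ∧ (lqNormPow d q f) ^ (1 / q) ≤ 1}

/-- the points `ξ^ν` built from `a` and `p`. -/
def xiPoint (d p a : ℕ) (ν : ℕ) : Fin d → ℝ :=
  fun j => 2 * π * Int.fract ((ν * a ^ (j : ℕ) : ℝ) / p)

/-- Dirichlet kernel of `Q`. -/
def dirKernel {d : ℕ} (Q : Finset (Fin d → ℤ)) : (Fin d → ℝ) → ℂ :=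
  fun x => ∑ k ∈ Q, Complex.exp (Complex.I * ∑ j, (k j : ℂ) * (x j : ℂ))

/-- `Λ(Q) = {m - k : m ∈ Q, k ∈ Q}`. -/
def diffSet {d : ℕ} (Q : Finset (Fin d → ℤ)) : Finset (Fin d → ℤ) :=
  (Q ×ˢ Q).image fun z => z.1 - z.2

lemma restrict_torusCube (d : ℕ) :
    (volume : Measure (Fin d → ℝ)).restrict (torusCube d)
      = Measure.pi (fun _ : Fin d => volume.restrict (Set.Ico 0 (2*π))) := by
  refine (Measure.pi_eq fun s hs => ?_).symm
  rw [Measure.restrict_apply (MeasurableSet.univ_pi hs), torusCube, ← Set.pi_inter_distrib,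
    volume_pi_pi]
  exact Finset.prod_congr rfl fun i _ => (Measure.restrict_apply (hs i)).symm

lemma pi_integral (d : ℕ) (μ₀ : Measure ℝ) [SigmaFinite μ₀] (f : Fin d → ℝ → ℂ) :
    ∫ x : Fin d → ℝ, ∏ j, f j (x j) ∂(Measure.pi fun _ => μ₀) = ∏ j, ∫ x, f j x ∂μ₀ := by
  letI : MeasureSpace ℝ := ⟨μ₀⟩
  exact MeasureTheory.integral_fintype_prod_eq_prod f

lemma orth1 (n : ℤ) : ∫ x in Set.Ico (0:ℝ) (2*π), Complex.exp (Complex.I * n * x) =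
    if n = 0 then (2*π : ℂ) else 0 := by
  rw [MeasureTheory.integral_Ico_eq_integral_Ioo, ← MeasureTheory.integral_Ioc_eq_integral_Ioo,
    ← intervalIntegral.integral_of_le (by positivity : (0:ℝ) ≤ 2*π)]
  by_cases hn : n = 0
  · simp [hn]
  · have h : (Complex.I * n) ≠ 0 := by simp [Complex.ext_iff, hn]
    rw [show (fun x : ℝ => Complex.exp (Complex.I * n * x)) =
        fun x : ℝ => Complex.exp ((Complex.I * n) * x) from rfl, integral_exp_mul_complex h]
    have : Complex.exp (Complex.I * n * (2*π)) = 1 := by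
      rw [show Complex.I * n * (2*π) = (n:ℤ) * (2 * π * Complex.I) by push_cast; ring]
      exact Complex.exp_int_mul_two_pi_mul_I n
    simp [hn, this]

lemma orthD (d : ℕ) (n : Fin d → ℤ) :
    ∫ x in torusCube d, Complex.exp (Complex.I * ∑ j, (n j : ℂ) * (x j : ℂ))
      = if n = 0 then ((2*π : ℝ)^d : ℂ) else 0 := by
  have hsplit : ∀ x : Fin d → ℝ, Complex.exp (Complex.I * ∑ j, (n j : ℂ) * (x j : ℂ))
      = ∏ j, Complex.exp (Complex.I * (n j) * (x j)) := by
    intro x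
    rw [Finset.mul_sum, Complex.exp_sum]
    exact Finset.prod_congr rfl fun j _ => by rw [mul_assoc]
  simp_rw [hsplit]
  rw [show (∫ x in torusCube d, ∏ j, Complex.exp (Complex.I * (n j) * (x j)))
      = ∫ x, ∏ j, Complex.exp (Complex.I * (n j) * (x j))
        ∂(Measure.pi fun _ : Fin d => volume.restrict (Set.Ico 0 (2*π))) by
    rw [← restrict_torusCube d]]
  rw [pi_integral d _ (fun j x => Complex.exp (Complex.I * (n j) * x))]
  simp_rw [orth1]
  by_cases hn : n = 0
  · simp [hn]
  · obtain ⟨j, hj⟩ : ∃ j, n j ≠ 0 := by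
      by_contra h; push_neg at h; exact hn (funext h)
    rw [if_neg hn]
    exact Finset.prod_eq_zero (Finset.mem_univ j) (by simp [hj])

lemma contExp {d : ℕ} (n : Fin d → ℤ) :
    Continuous fun x : Fin d → ℝ => Complex.exp (Complex.I * ∑ j, (n j : ℂ) * (x j : ℂ)) := by
  fun_prop

lemma integrableOn_torusCube {d : ℕ} {f : (Fin d → ℝ) → ℂ} (hf : Continuous f) :
    IntegrableOn f (torusCube d) := by
  have h1 : IntegrableOn f (Set.univ.pi fun _ : Fin d => Set.Icc (0:ℝ) (2*π)) :=
    hf.continuousOn.integrableOn_compact (isCompact_univ_pi fun _ => isCompact_Icc)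
  exact h1.mono_set (Set.pi_mono fun i _ => Set.Ico_subset_Icc_self)

lemma trigSum_mul_conj {d : ℕ} (Q : Finset (Fin d → ℤ)) (c : (Fin d → ℤ) → ℂ)
    (x : Fin d → ℝ) :
    trigSum Q c x * (starRingEnd ℂ) (trigSum Q c x)
      = ∑ k ∈ Q, ∑ m ∈ Q, (c k * (starRingEnd ℂ) (c m)) *
          Complex.exp (Complex.I * ∑ j, ((k - m) j : ℂ) * (x j : ℂ)) := by
  rw [trigSum, map_sum, Finset.sum_mul_sum]
  refine Finset.sum_congr rfl fun k hk => Finset.sum_congr rfl fun m hm => ?_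
  rw [map_mul, ← Complex.exp_conj]
  have hc : (starRingEnd ℂ) (Complex.I * ∑ j, (m j : ℂ) * (x j : ℂ))
      = - (Complex.I * ∑ j, (m j : ℂ) * (x j : ℂ)) := by
    rw [map_mul, Complex.conj_I, map_sum]
    simp only [map_mul, map_intCast, Complex.conj_ofReal]
    ring
  rw [hc]
  rw [mul_mul_mul_comm, ← Complex.exp_add]
  congr 1
  rw [← mul_neg, ← mul_add, ← Finset.sum_neg_distrib, ← Finset.sum_add_distrib]
  congr 1; congr 1
  refine Finset.sum_congr rfl fun j _ => ?_
  have : ((k - m) j : ℂ) = (k j : ℂ) - (m j : ℂ) := by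
    simp [Pi.sub_apply]
  rw [this]; ring

lemma measurableTorusCube (d : ℕ) : MeasurableSet (torusCube d) :=
  MeasurableSet.univ_pi fun _ => measurableSet_Ico

lemma parseval {d : ℕ} (Q : Finset (Fin d → ℤ)) (c : (Fin d → ℤ) → ℂ) :
    lqNormPow d 2 (trigSum Q c) = ∑ k ∈ Q, ‖c k‖ ^ (2:ℕ) := by
  have hcont : Continuous (trigSum Q c) := by
    unfold trigSum
    exact continuous_finset_sum _ fun k _ => (continuous_const.mul (contExp k))
  have hterm : ∀ k m : Fin d → ℤ,
      (∫ x in torusCube d, (c k * (starRingEnd ℂ) (c m)) *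
        Complex.exp (Complex.I * ∑ j, ((k - m) j : ℂ) * (x j : ℂ)))
      = if k = m then (c k * (starRingEnd ℂ) (c m)) * ((2*π:ℝ)^d : ℂ) else 0 := by
    intro k m
    rw [MeasureTheory.integral_const_mul, orthD d (k - m)]
    by_cases h : k = m
    · simp [h]
    · rw [if_neg (fun hkm => h (sub_eq_zero.mp hkm)), if_neg h, mul_zero]
  have key : (∫ x in torusCube d,
        trigSum Q c x * (starRingEnd ℂ) (trigSum Q c x))
      = (((2*π:ℝ)^d * ∑ k ∈ Q, Complex.normSq (c k) : ℝ) : ℂ) := by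
    rw [MeasureTheory.setIntegral_congr_fun (measurableTorusCube d)
      (fun x _ => trigSum_mul_conj Q c x)]
    rw [MeasureTheory.integral_finset_sum _ (fun k _ =>
      MeasureTheory.integrable_finset_sum _ (fun m _ =>
        (integrableOn_torusCube (continuous_const.mul (contExp (k - m))) :
          Integrable (fun x => (c k * (starRingEnd ℂ) (c m)) *
            Complex.exp (Complex.I * ∑ j, ((k - m) j : ℂ) * (x j : ℂ)))
              (volume.restrict (torusCube d)))))]
    calc ∑ k ∈ Q, ∫ x in torusCube d, ∑ m ∈ Q, (c k * (starRingEnd ℂ) (c m)) *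
            Complex.exp (Complex.I * ∑ j, ((k - m) j : ℂ) * (x j : ℂ))
        = ∑ k ∈ Q, ∑ m ∈ Q, ∫ x in torusCube d, (c k * (starRingEnd ℂ) (c m)) *
            Complex.exp (Complex.I * ∑ j, ((k - m) j : ℂ) * (x j : ℂ)) := by
          exact Finset.sum_congr rfl fun k _ => MeasureTheory.integral_finset_sum _
            (fun m _ => integrableOn_torusCube (continuous_const.mul (contExp (k - m))))
      _ = ∑ k ∈ Q, ∑ m ∈ Q, if k = m then (c k * (starRingEnd ℂ) (c m)) * ((2*π:ℝ)^d : ℂ)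
            else 0 := by
          exact Finset.sum_congr rfl fun k _ => Finset.sum_congr rfl fun m _ => hterm k m
      _ = ∑ k ∈ Q, (c k * (starRingEnd ℂ) (c k)) * ((2*π:ℝ)^d : ℂ) := by
          exact Finset.sum_congr rfl fun k hk => by rw [Finset.sum_ite_eq Q k, if_pos hk]
      _ = (((2*π:ℝ)^d * ∑ k ∈ Q, Complex.normSq (c k) : ℝ) : ℂ) := by
          push_cast
          rw [Finset.mul_sum]
          exact Finset.sum_congr rfl fun k _ => by rw [Complex.mul_conj]; ring
  have hpt : ∀ x : Fin d → ℝ, ‖trigSum Q c x‖ ^ (2:ℝ)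
      = Complex.re (trigSum Q c x * (starRingEnd ℂ) (trigSum Q c x)) := by
    intro x
    rw [show (2:ℝ) = ((2:ℕ):ℝ) by norm_num, Real.rpow_natCast, Complex.mul_conj,
      Complex.ofReal_re, Complex.sq_norm]
  have hint : IntegrableOn (fun x => trigSum Q c x * (starRingEnd ℂ) (trigSum Q c x))
      (torusCube d) :=
    integrableOn_torusCube (hcont.mul (Complex.continuous_conj.comp hcont))
  rw [lqNormPow]
  rw [MeasureTheory.setIntegral_congr_fun (measurableTorusCube d) (fun x _ => hpt x)]
  rw [show (∫ x in torusCube d, (trigSum Q c x * (starRingEnd ℂ) (trigSum Q c x)).re) = Complex.re (∫ x in torusCube d, trigSum Q c x * (starRingEnd ℂ) (trigSum Q c x)) from integral_re hint, key]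
  have hpos : (0:ℝ) < (2*π)^d := by positivity
  rw [Complex.ofReal_re, ← mul_assoc, inv_mul_cancel₀ (ne_of_gt hpos), one_mul]
  exact Finset.sum_congr rfl fun k _ => by
    rw [Complex.sq_norm]

def linS {d : ℕ} (a : ℕ) (k : Fin d → ℤ) : ℤ := ∑ j, k j * (a:ℤ) ^ (j:ℕ)

lemma Tb_eq (d p a : ℕ) (Q : Finset (Fin d → ℤ)) (b : ℕ → ℂ) :
    (fun x => (1 / (p : ℂ)) * ∑ ν ∈ Finset.Icc 1 p, b ν * dirKernel Q (x - xiPoint d p a ν))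
    = trigSum Q (fun k => (1 / (p:ℂ)) * ∑ ν ∈ Finset.Icc 1 p,
        b ν * Complex.exp (-(Complex.I) * ∑ j, (k j:ℂ) * ((xiPoint d p a ν j : ℝ) : ℂ))) := by
  funext x
  have h1 : ∀ (ν : ℕ) (k : Fin d → ℤ),
      Complex.exp (Complex.I * ∑ j, (k j:ℂ) * (((x - xiPoint d p a ν) j : ℝ) : ℂ))
      = Complex.exp (-(Complex.I) * ∑ j, (k j:ℂ) * ((xiPoint d p a ν j : ℝ) : ℂ)) *
        Complex.exp (Complex.I * ∑ j, (k j:ℂ) * ((x j : ℝ) : ℂ)) := by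
    intro ν k
    rw [← Complex.exp_add]
    congr 1
    simp only [Pi.sub_apply, Complex.ofReal_sub, mul_sub, Finset.sum_sub_distrib]
    ring
  unfold dirKernel trigSum
  simp_rw [h1]
  calc (1 / (p:ℂ)) * ∑ ν ∈ Finset.Icc 1 p, b ν * ∑ k ∈ Q,
        Complex.exp (-(Complex.I) * ∑ j, (k j:ℂ) * ((xiPoint d p a ν j : ℝ) : ℂ)) *
          Complex.exp (Complex.I * ∑ j, (k j:ℂ) * ((x j : ℝ) : ℂ))
      = ∑ ν ∈ Finset.Icc 1 p, ∑ k ∈ Q, (1 / (p:ℂ)) *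
          (b ν * Complex.exp (-(Complex.I) * ∑ j, (k j:ℂ) * ((xiPoint d p a ν j : ℝ) : ℂ))) *
          Complex.exp (Complex.I * ∑ j, (k j:ℂ) * ((x j : ℝ) : ℂ)) := by
        rw [Finset.mul_sum]
        refine Finset.sum_congr rfl fun ν _ => ?_
        rw [Finset.mul_sum, Finset.mul_sum]
        exact Finset.sum_congr rfl fun k _ => by ring
    _ = ∑ k ∈ Q, ∑ ν ∈ Finset.Icc 1 p, (1 / (p:ℂ)) *
          (b ν * Complex.exp (-(Complex.I) * ∑ j, (k j:ℂ) * ((xiPoint d p a ν j : ℝ) : ℂ))) *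
          Complex.exp (Complex.I * ∑ j, (k j:ℂ) * ((x j : ℝ) : ℂ)) := Finset.sum_comm
    _ = ∑ k ∈ Q, ((1 / (p:ℂ)) * ∑ ν ∈ Finset.Icc 1 p,
          b ν * Complex.exp (-(Complex.I) * ∑ j, (k j:ℂ) * ((xiPoint d p a ν j : ℝ) : ℂ))) *
          Complex.exp (Complex.I * ∑ j, (k j:ℂ) * ((x j : ℝ) : ℂ)) := by
        refine Finset.sum_congr rfl fun k _ => ?_
        rw [← Finset.sum_mul]
        congr 1
        rw [Finset.mul_sum]

lemma exp_xi (d p a : ℕ) (hp : 0 < p) (k : Fin d → ℤ) (ν : ℕ) :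
    Complex.exp (-(Complex.I) * ∑ j, (k j:ℂ) * ((xiPoint d p a ν j : ℝ) : ℂ))
    = Complex.exp (-(2 * π * Complex.I) * ν * (linS a k) / p) := by
  have hparg : -(Complex.I) * ∑ j, (k j:ℂ) * ((xiPoint d p a ν j : ℝ) : ℂ)
      = -(2 * π * Complex.I) * ν * (linS a k) / p
        + (∑ j, k j * ⌊((ν * a ^ (j:ℕ) : ℝ)) / p⌋ : ℤ) * (2 * π * Complex.I) := by
    have hterm : ∀ j : Fin d, ((xiPoint d p a ν j : ℝ) : ℂ)
        = 2 * π * ((ν * a ^ (j:ℕ) : ℂ) / p) -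
          2 * π * ((⌊((ν * a ^ (j:ℕ) : ℝ)) / p⌋ : ℤ) : ℂ) := by
      intro j
      rw [xiPoint, ← Int.self_sub_floor]
      push_cast
      ring
    simp_rw [hterm, linS]
    push_cast
    rw [Finset.mul_sum, Finset.mul_sum, Finset.sum_div, Finset.sum_mul,
      ← Finset.sum_add_distrib]
    exact Finset.sum_congr rfl fun j _ => by ring
  rw [hparg, Complex.exp_add,
    Complex.exp_int_mul_two_pi_mul_I, mul_one]

def dftG (p : ℕ) (b : ℕ → ℂ) (s : ℤ) : ℂ :=
  ∑ ν ∈ Finset.Icc 1 p, b ν * Complex.exp (-(2 * π * Complex.I) * ν * s / p)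

lemma dftG_mod (p : ℕ) (hp : 0 < p) (b : ℕ → ℂ) (s : ℤ) : dftG p b s = dftG p b (s % p) := by
  have hp' : (p:ℂ) ≠ 0 := Nat.cast_ne_zero.mpr hp.ne'
  unfold dftG
  refine Finset.sum_congr rfl fun ν _ => ?_
  congr 1
  have hs : (s:ℂ) = (p:ℂ) * ((s / p : ℤ) : ℂ) + ((s % p : ℤ) : ℂ) := by
    rw [show ((s % p : ℤ) : ℂ) = ((s - p * (s/p) : ℤ) : ℂ) by rw [Int.emod_def]]
    push_cast; ring
  have harg : -(2 * π * Complex.I) * ν * s / p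
      = -(2 * π * Complex.I) * ν * ((s % p : ℤ) : ℂ) / p
        + ((-(ν : ℤ) * (s / p) : ℤ) : ℂ) * (2 * π * Complex.I) := by
    rw [hs]; push_cast; field_simp; ring
  rw [harg, Complex.exp_add, Complex.exp_int_mul_two_pi_mul_I, mul_one]

lemma exp_sum_root (p : ℕ) (hp : 0 < p) (t : ℤ) :
    ∑ r ∈ Finset.range p, Complex.exp (2 * π * Complex.I * t * r / p)
      = if (p:ℤ) ∣ t then (p:ℂ) else 0 := by
  have hp' : (p:ℂ) ≠ 0 := Nat.cast_ne_zero.mpr hp.ne'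
  have hw : ∀ r : ℕ, Complex.exp (2 * π * Complex.I * t * r / p)
      = Complex.exp (2 * π * Complex.I * t / p) ^ r := by
    intro r
    rw [← Complex.exp_nat_mul]
    congr 1
    field_simp
  simp_rw [hw]
  by_cases hdvd : (p:ℤ) ∣ t
  · obtain ⟨c, hc⟩ := hdvd
    have h1 : Complex.exp (2 * π * Complex.I * t / p) = 1 := by
      rw [show 2 * π * Complex.I * t / p = (c:ℤ) * (2 * π * Complex.I) by
        rw [hc]; push_cast; field_simp]
      exact Complex.exp_int_mul_two_pi_mul_I c
    rw [if_pos ⟨c, hc⟩]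
    simp [h1]
  · have hw1 : Complex.exp (2 * π * Complex.I * t / p) ≠ 1 := by
      intro h
      rw [Complex.exp_eq_one_iff] at h
      obtain ⟨n, hn⟩ := h
      apply hdvd
      refine ⟨n, ?_⟩
      have h2πI : (2 * π * Complex.I) ≠ 0 := by
        simp [Complex.ext_iff, Real.pi_ne_zero]
      have h2 : (t:ℂ) = n * p := by
        field_simp at hn
        exact mul_left_cancel₀ h2πI (by linear_combination (2 * π * Complex.I) * hn)
      have h3 : t = n * p := by exact_mod_cast h2
      exact h3.trans (mul_comm n p)
    have hwp : Complex.exp (2 * π * Complex.I * t / p) ^ p = 1 := by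
      rw [← Complex.exp_nat_mul, show (p:ℂ) * (2 * π * Complex.I * t / p) = (t:ℤ) * (2 * π * Complex.I) by field_simp]
      exact Complex.exp_int_mul_two_pi_mul_I t
    rw [if_neg hdvd, geom_sum_eq hw1, hwp, sub_self, zero_div]

lemma exp_sum_root' (p : ℕ) (hp : 0 < p) (μ ν : ℕ) :
    ∑ r ∈ Finset.range p, Complex.exp (2 * π * Complex.I * ((μ:ℂ) - (ν:ℂ)) * r / p)
      = if (p:ℤ) ∣ ((μ:ℤ) - (ν:ℤ)) then (p:ℂ) else 0 := by
  have h := exp_sum_root p hp ((μ:ℤ) - (ν:ℤ))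
  push_cast at h
  exact h

lemma dftG_parseval (p : ℕ) (hp : 0 < p) (b : ℕ → ℂ) :
    ∑ r ∈ Finset.range p, ‖dftG p b (r:ℤ)‖ ^ (2:ℕ)
      = p * ∑ ν ∈ Finset.Icc 1 p, ‖b ν‖ ^ (2:ℕ) := by
  have hp' : (p:ℂ) ≠ 0 := Nat.cast_ne_zero.mpr hp.ne'
  have hconj : ∀ r : ℕ, (starRingEnd ℂ) (dftG p b (r:ℤ))
      = ∑ μ ∈ Finset.Icc 1 p, (starRingEnd ℂ) (b μ) *
          Complex.exp (2 * π * Complex.I * μ * r / p) := by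
    intro r
    rw [dftG, map_sum]
    refine Finset.sum_congr rfl fun μ _ => ?_
    rw [map_mul, ← Complex.exp_conj]
    congr 1
    simp only [map_div₀, map_mul, map_neg, map_ofNat, Complex.conj_ofReal, Complex.conj_I,
      Complex.conj_natCast, map_intCast]
    push_cast
    ring
  have key : ∑ r ∈ Finset.range p, dftG p b (r:ℤ) * (starRingEnd ℂ) (dftG p b (r:ℤ))
      = (((p:ℝ) * ∑ ν ∈ Finset.Icc 1 p, Complex.normSq (b ν) : ℝ) : ℂ) := by
    have hexpand : ∀ r : ℕ, dftG p b (r:ℤ) * (starRingEnd ℂ) (dftG p b (r:ℤ))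
        = ∑ ν ∈ Finset.Icc 1 p, ∑ μ ∈ Finset.Icc 1 p, (b ν * (starRingEnd ℂ) (b μ)) *
            Complex.exp (2 * π * Complex.I * ((μ:ℂ) - (ν:ℂ)) * r / p) := by
      intro r
      rw [hconj r, dftG, Finset.sum_mul_sum]
      refine Finset.sum_congr rfl fun ν _ => Finset.sum_congr rfl fun μ _ => ?_
      rw [mul_mul_mul_comm, ← Complex.exp_add]
      congr 1
      push_cast
      ring
    simp_rw [hexpand]
    rw [Finset.sum_comm]
    have hswap : ∀ ν ∈ Finset.Icc 1 p, ∀ μ ∈ Finset.Icc 1 p,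
        ∑ r ∈ Finset.range p, (b ν * (starRingEnd ℂ) (b μ)) *
            Complex.exp (2 * π * Complex.I * ((μ:ℂ) - (ν:ℂ)) * r / p)
          = if μ = ν then (b ν * (starRingEnd ℂ) (b μ)) * p else 0 := by
      intro ν hν μ hμ
      rw [← Finset.mul_sum, exp_sum_root' p hp μ ν]
      by_cases h : μ = ν
      · rw [if_pos (by rw [h]; simp), if_pos h]
      · rw [if_neg, if_neg h, mul_zero]
        intro hdvd
        apply h
        simp only [Finset.mem_Icc] at hν hμ
        have habs : |(μ:ℤ) - (ν:ℤ)| < p := by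
          rw [abs_lt]
          constructor <;> omega
        have := Int.eq_zero_of_abs_lt_dvd hdvd habs
        omega
    calc ∑ ν ∈ Finset.Icc 1 p, ∑ r ∈ Finset.range p, ∑ μ ∈ Finset.Icc 1 p,
          (b ν * (starRingEnd ℂ) (b μ)) *
            Complex.exp (2 * π * Complex.I * ((μ:ℂ) - (ν:ℂ)) * r / p)
        = ∑ ν ∈ Finset.Icc 1 p, ∑ μ ∈ Finset.Icc 1 p, ∑ r ∈ Finset.range p,
            (b ν * (starRingEnd ℂ) (b μ)) *
              Complex.exp (2 * π * Complex.I * ((μ:ℂ) - (ν:ℂ)) * r / p) :=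
          Finset.sum_congr rfl fun ν _ => Finset.sum_comm
      _ = ∑ ν ∈ Finset.Icc 1 p, ∑ μ ∈ Finset.Icc 1 p,
            if μ = ν then (b ν * (starRingEnd ℂ) (b μ)) * p else 0 :=
          Finset.sum_congr rfl fun ν hν => Finset.sum_congr rfl fun μ hμ => hswap ν hν μ hμ
      _ = (((p:ℝ) * ∑ ν ∈ Finset.Icc 1 p, Complex.normSq (b ν) : ℝ) : ℂ) := by
          push_cast
          rw [Finset.mul_sum]
          refine Finset.sum_congr rfl fun ν hν => ?_
          rw [Finset.sum_ite_eq' (Finset.Icc 1 p) ν, if_pos hν, Complex.mul_conj]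
          ring
  have hre : ∀ r : ℕ, ‖dftG p b (r:ℤ)‖ ^ (2:ℕ)
      = (dftG p b (r:ℤ) * (starRingEnd ℂ) (dftG p b (r:ℤ))).re := by
    intro r
    rw [Complex.mul_conj, Complex.ofReal_re, Complex.sq_norm]
  simp_rw [hre]
  rw [← Complex.re_sum, key, Complex.ofReal_re]
  congr 1
  exact Finset.sum_congr rfl fun ν _ => by rw [Complex.sq_norm]

theorem stmt11 (d : ℕ) (hd : 0 < d) (Q : Finset (Fin d → ℤ)) (p : ℕ) (hp : p.Prime)
    (a : ℕ) (ha1 : 1 ≤ a) (hap : a < p)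
    (ha : ∀ mm ∈ diffSet Q, mm ≠ 0 → ¬ ((p : ℤ) ∣ ∑ j, mm j * (a : ℤ) ^ (j : ℕ))) :
    ∀ b : ℕ → ℂ,
      Real.sqrt (lqNormPow d 2 (fun x =>
          (1 / (p : ℂ)) * ∑ ν ∈ Finset.Icc 1 p, b ν * dirKernel Q (x - xiPoint d p a ν))) ≤
        Real.sqrt ((1 / p) * ∑ ν ∈ Finset.Icc 1 p, ‖b ν‖ ^ 2) := by
  intro b
  have hp0 : 0 < p := hp.pos
  have hpR : (0:ℝ) < p := by exact_mod_cast hp0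
  have hpZ : (p:ℤ) ≠ 0 := by exact_mod_cast hp0.ne'
  rw [Tb_eq d p a Q b, parseval]
  apply Real.sqrt_le_sqrt
  set rk : (Fin d → ℤ) → ℕ := fun k => ((linS a k) % p).toNat with hrk
  have hcast : ∀ k, ((rk k : ℕ) : ℤ) = (linS a k) % p := fun k =>
    Int.toNat_of_nonneg (Int.emod_nonneg _ hpZ)
  have hck : ∀ k : Fin d → ℤ,
      ‖(1 / (p:ℂ)) * ∑ ν ∈ Finset.Icc 1 p,
        b ν * Complex.exp (-(Complex.I) * ∑ j, (k j:ℂ) * ((xiPoint d p a ν j : ℝ) : ℂ))‖ ^ (2:ℕ)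
      = (1/(p:ℝ))^2 * ‖dftG p b ((rk k : ℕ) : ℤ)‖ ^ (2:ℕ) := by
    intro k
    have h1 : (∑ ν ∈ Finset.Icc 1 p,
        b ν * Complex.exp (-(Complex.I) * ∑ j, (k j:ℂ) * ((xiPoint d p a ν j : ℝ) : ℂ)))
        = dftG p b ((rk k : ℕ) : ℤ) := by
      rw [hcast, ← dftG_mod p hp0 b (linS a k), dftG]
      exact Finset.sum_congr rfl fun ν _ => by rw [exp_xi d p a hp0 k ν]
    rw [h1, norm_mul, mul_pow]
    congr 1
    rw [norm_div, norm_one, Complex.norm_natCast]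
  calc ∑ k ∈ Q, ‖(1 / (p:ℂ)) * ∑ ν ∈ Finset.Icc 1 p,
          b ν * Complex.exp (-(Complex.I) * ∑ j, (k j:ℂ) * ((xiPoint d p a ν j : ℝ) : ℂ))‖ ^ (2:ℕ)
      = ∑ k ∈ Q, (1/(p:ℝ))^2 * ‖dftG p b ((rk k : ℕ) : ℤ)‖ ^ (2:ℕ) :=
        Finset.sum_congr rfl fun k _ => hck k
    _ = (1/(p:ℝ))^2 * ∑ k ∈ Q, ‖dftG p b ((rk k : ℕ) : ℤ)‖ ^ (2:ℕ) := by
        rw [Finset.mul_sum]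
    _ ≤ (1/(p:ℝ))^2 * ∑ r ∈ Finset.range p, ‖dftG p b (r:ℤ)‖ ^ (2:ℕ) := by
        apply mul_le_mul_of_nonneg_left _ (by positivity)
        have hinj : ∀ x ∈ Q, ∀ y ∈ Q, rk x = rk y → x = y := by
          intro x hx y hy hxy
          by_contra hne
          have hmod : (linS a x) % p = (linS a y) % p := by
            have := congrArg (fun n : ℕ => (n : ℤ)) hxy
            simpa [hcast] using this
          have hdvd : (p:ℤ) ∣ linS a x - linS a y := (Int.ModEq.dvd hmod.symm)
          have hmm : x - y ∈ diffSet Q :=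
            Finset.mem_image.mpr ⟨(x, y), Finset.mem_product.mpr ⟨hx, hy⟩, rfl⟩
          have hne' : x - y ≠ 0 := sub_ne_zero.mpr hne
          apply ha (x - y) hmm hne'
          have : (∑ j, (x - y) j * (a : ℤ) ^ (j : ℕ)) = linS a x - linS a y := by
            simp only [Pi.sub_apply, sub_mul, Finset.sum_sub_distrib, linS]
          rw [this]
          exact hdvd
        rw [show (∑ k ∈ Q, ‖dftG p b ((rk k : ℕ):ℤ)‖ ^ (2:ℕ))
            = ∑ r ∈ Q.image rk, ‖dftG p b ((r:ℕ):ℤ)‖ ^ (2:ℕ) from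
          (Finset.sum_image (f := fun r : ℕ => ‖dftG p b ((r:ℕ):ℤ)‖ ^ (2:ℕ)) hinj).symm]
        apply Finset.sum_le_sum_of_subset_of_nonneg
        · intro r hr
          obtain ⟨k, hk, hkr⟩ := Finset.mem_image.mp hr
          rw [Finset.mem_range, ← hkr]
          have h1 : (linS a k) % p < p := Int.emod_lt_of_pos _ (by exact_mod_cast hp0)
          have h2 : 0 ≤ (linS a k) % p := Int.emod_nonneg _ hpZ
          simp only [hrk]
          omega
        · intro r _ _
          positivity
    _ = (1/(p:ℝ)) * ∑ ν ∈ Finset.Icc 1 p, ‖b ν‖ ^ 2 := by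
        rw [dftG_parseval p hp0 b]
        field_simp

end
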